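/- arXiv:1306.4295 — 5 statements merged into one kernel-verified Lean document; each statement's English description precedes it below -/
import Mathlib

section
/- Representation formula: let f = I(F) be a slice function on Ω_D and J, K ∈ S with J ≠ K. Then for every I ∈ S and every x = α + βI ∈ Ω_D with z = α + iβ ∈ D, f(x) = (I - K)((J - K)⁻¹ f(α + βJ)) - (I - J)((J - K)⁻¹ f(α + βK)). -/
/-- Representation formula for slice functions:
`f(α+βI) = (I-K)((J-K)⁻¹ f(α+βJ)) - (I-J)((J-K)⁻¹ f(α+βK))`. -/
theorem representation_formula (D : Set ℂ) (hD : IsOpen D)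
    (hsym : ∀ z ∈ D, (starRingEnd ℂ) z ∈ D)
    (F₁ F₂ : ℂ → Quaternion ℝ)
    (hstem : ∀ z ∈ D, F₁ ((starRingEnd ℂ) z) = F₁ z ∧ F₂ ((starRingEnd ℂ) z) = -F₂ z)
    (f : Quaternion ℝ → Quaternion ℝ)
    (hf : ∀ (I : Quaternion ℝ), I ^ 2 = -1 → ∀ α β : ℝ, (α : ℂ) + β * Complex.I ∈ D →
      f ((α : Quaternion ℝ) + β • I)
        = F₁ ((α : ℂ) + β * Complex.I) + I * F₂ ((α : ℂ) + β * Complex.I))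
    (I J K : Quaternion ℝ) (hI : I ^ 2 = -1) (hJ : J ^ 2 = -1) (hK : K ^ 2 = -1)
    (hJK : J ≠ K) (α β : ℝ) (hz : (α : ℂ) + β * Complex.I ∈ D) :
    f ((α : Quaternion ℝ) + β • I)
      = (I - K) * ((J - K)⁻¹ * f ((α : Quaternion ℝ) + β • J))
        - (I - J) * ((J - K)⁻¹ * f ((α : Quaternion ℝ) + β • K)) := by
  have hq : J - K ≠ 0 := sub_ne_zero.mpr hJK
  set u := (J - K)⁻¹ with hu
  have hqu : (J - K) * u = 1 := mul_inv_cancel₀ hq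
  have huq : u * (J - K) = 1 := inv_mul_cancel₀ hq
  have hJ2 : J * J = -1 := by rw [← pow_two]; exact hJ
  have hK2 : K * K = -1 := by rw [← pow_two]; exact hK
  have huJ : u * J = -(K * u) := by
    have hzero : J * (J - K) + (J - K) * K = 0 := by
      rw [mul_sub, sub_mul, hJ2, hK2]; noncomm_ring
    have h1 : u * (J * (J - K) + (J - K) * K) * u = 0 := by
      rw [hzero, mul_zero, zero_mul]
    have h2 : u * (J * (J - K) + (J - K) * K) * u = u * J + K * u := by
      rw [mul_add, add_mul, ← mul_assoc u J, mul_assoc (u * J), hqu, mul_one,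
        ← mul_assoc u (J - K), huq, one_mul]
    exact (add_eq_zero_iff_eq_neg.mp (h2 ▸ h1))
  have huK : u * K = -(J * u) := by
    have hzero : K * (J - K) + (J - K) * J = 0 := by
      rw [mul_sub, sub_mul, hJ2, hK2]; noncomm_ring
    have h1 : u * (K * (J - K) + (J - K) * J) * u = 0 := by
      rw [hzero, mul_zero, zero_mul]
    have h2 : u * (K * (J - K) + (J - K) * J) * u = u * K + J * u := by
      rw [mul_add, add_mul, ← mul_assoc u K, mul_assoc (u * K), hqu, mul_one,
        ← mul_assoc u (J - K), huq, one_mul]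
    exact (add_eq_zero_iff_eq_neg.mp (h2 ▸ h1))
  rw [hf I hI α β hz, hf J hJ α β hz, hf K hK α β hz]
  set A := F₁ ((α : ℂ) + β * Complex.I)
  set B := F₂ ((α : ℂ) + β * Complex.I)
  rw [mul_add u A, mul_add u A, ← mul_assoc u J, huJ, ← mul_assoc u K, huK]
  have e1 : (I - K) * (u * A) - (I - J) * (u * A) = A := by
    rw [← mul_assoc, ← mul_assoc, ← sub_mul, ← sub_mul]
    have : I - K - (I - J) = J - K := by noncomm_ring
    rw [this, hqu, one_mul]
  have e2 : (I - K) * (-(K * u) * B) - (I - J) * (-(J * u) * B) = I * B := by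
    rw [← mul_assoc, ← mul_assoc, ← sub_mul]
    have : (I - K) * -(K * u) - (I - J) * -(J * u) = I * ((J - K) * u) := by
      have h3 : (I - K) * -(K * u) - (I - J) * -(J * u)
          = (-( (I - K) * K) + (I - J) * J) * u := by noncomm_ring
      have h4 : -((I - K) * K) + (I - J) * J = I * (J - K) := by
        rw [sub_mul, sub_mul, hJ2, hK2]; noncomm_ring
      rw [h3, h4, mul_assoc]
    rw [this, hqu, mul_one]
  rw [mul_add (I - K), mul_add (I - J), add_sub_add_comm, e1, e2]
end

section
/- For slice functions f, g on Ω_D, in general (f·g)(x) = f(x)·[g evaluated at x twisted]: explicitly, if x = α + βJ, z = α + iβ, and f(x) = F₁(z) + J F₂(z) ≠ 0, then (f·g)(x) = f(x) · g(f(x)⁻¹ x f(x)). -/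
/-- For slice functions, `(f·g)(x) = f(x) g(f(x)⁻¹ x f(x))` whenever `f(x) ≠ 0`. -/
theorem slice_product_twist (D : Set ℂ) (hD : IsOpen D)
    (hsym : ∀ z ∈ D, (starRingEnd ℂ) z ∈ D)
    (F₁ F₂ G₁ G₂ : ℂ → Quaternion ℝ)
    (hstemF : ∀ z ∈ D, F₁ ((starRingEnd ℂ) z) = F₁ z ∧ F₂ ((starRingEnd ℂ) z) = -F₂ z)
    (hstemG : ∀ z ∈ D, G₁ ((starRingEnd ℂ) z) = G₁ z ∧ G₂ ((starRingEnd ℂ) z) = -G₂ z)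
    (f g h : Quaternion ℝ → Quaternion ℝ)
    (hf : ∀ (I : Quaternion ℝ), I ^ 2 = -1 → ∀ α β : ℝ, (α : ℂ) + β * Complex.I ∈ D →
      f ((α : Quaternion ℝ) + β • I)
        = F₁ ((α : ℂ) + β * Complex.I) + I * F₂ ((α : ℂ) + β * Complex.I))
    (hg : ∀ (I : Quaternion ℝ), I ^ 2 = -1 → ∀ α β : ℝ, (α : ℂ) + β * Complex.I ∈ D →
      g ((α : Quaternion ℝ) + β • I)
        = G₁ ((α : ℂ) + β * Complex.I) + I * G₂ ((α : ℂ) + β * Complex.I))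
    (hh : ∀ (I : Quaternion ℝ), I ^ 2 = -1 → ∀ α β : ℝ, (α : ℂ) + β * Complex.I ∈ D →
      h ((α : Quaternion ℝ) + β • I)
        = (F₁ ((α : ℂ) + β * Complex.I) * G₁ ((α : ℂ) + β * Complex.I)
            - F₂ ((α : ℂ) + β * Complex.I) * G₂ ((α : ℂ) + β * Complex.I))
          + I * (F₁ ((α : ℂ) + β * Complex.I) * G₂ ((α : ℂ) + β * Complex.I)
            + F₂ ((α : ℂ) + β * Complex.I) * G₁ ((α : ℂ) + β * Complex.I)))
    (J : Quaternion ℝ) (hJ : J ^ 2 = -1) (α β : ℝ)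
    (hz : (α : ℂ) + β * Complex.I ∈ D)
    (hne : f ((α : Quaternion ℝ) + β • J) ≠ 0) :
    h ((α : Quaternion ℝ) + β • J)
      = f ((α : Quaternion ℝ) + β • J)
        * g ((f ((α : Quaternion ℝ) + β • J))⁻¹ * ((α : Quaternion ℝ) + β • J)
              * f ((α : Quaternion ℝ) + β • J)) := by
  set z : ℂ := (α : ℂ) + β * Complex.I with hzdef
  set x : Quaternion ℝ := (α : Quaternion ℝ) + β • J with hxdef
  set q : Quaternion ℝ := f x with hqdef
  have hqinv : q⁻¹ * q = 1 := inv_mul_cancel₀ hne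
  have hqinv' : q * q⁻¹ = 1 := mul_inv_cancel₀ hne
  set J' : Quaternion ℝ := q⁻¹ * J * q with hJ'def
  have hJ' : J' ^ 2 = -1 := by
    have : J' ^ 2 = q⁻¹ * (J * (q * q⁻¹) * J) * q := by
      rw [sq, hJ'def]; noncomm_ring
    rw [this, hqinv', mul_one, ← sq, hJ]
    calc q⁻¹ * (-1 : Quaternion ℝ) * q = -(q⁻¹ * q) := by noncomm_ring
    _ = -1 := by rw [hqinv]
  have hsmul : ∀ (c : ℝ) (y : Quaternion ℝ), c • y = (c : Quaternion ℝ) * y := by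
    intro c y
    rw [← Quaternion.coe_mul_eq_smul]
  have hcomm : ∀ (c : ℝ) (y : Quaternion ℝ), (c : Quaternion ℝ) * y = y * (c : Quaternion ℝ) :=
    fun c y => Quaternion.coe_commutes c y
  have hx' : q⁻¹ * x * q = (α : Quaternion ℝ) + β • J' := by
    rw [hxdef, hJ'def, mul_add, add_mul, mul_smul_comm, smul_mul_assoc,
      ← hcomm α q⁻¹, mul_assoc, hqinv, mul_one]
  have hgx : g (q⁻¹ * x * q) = G₁ z + J' * G₂ z := by
    rw [hx']; exact hg J' hJ' α β hz
  have hfq : q = F₁ z + J * F₂ z := hf J hJ α β hz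
  have hJq : q * J' = J * q := by
    rw [hJ'def, ← mul_assoc, ← mul_assoc, hqinv', one_mul]
  rw [hh J hJ α β hz, hgx]
  have : q * (G₁ z + J' * G₂ z) = q * G₁ z + J * q * G₂ z := by
    rw [mul_add, ← mul_assoc, hJq]
  rw [this, hfq]
  have hJJ : J * J = -1 := by rw [← sq, hJ]
  calc F₁ z * G₁ z - F₂ z * G₂ z + J * (F₁ z * G₂ z + F₂ z * G₁ z)
      = (F₁ z + J * F₂ z) * G₁ z + (J * F₁ z + (J * J) * F₂ z) * G₂ z := by
        rw [hJJ]; noncomm_ring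
    _ = (F₁ z + J * F₂ z) * G₁ z + J * (F₁ z + J * F₂ z) * G₂ z := by noncomm_ring
end

section
/- The zero set of the symmetrization is the circularization of the zero set: for any slice function f on Ω_D, V(N(f)) = ⋃_{x ∈ V(f)} S_x, where N(f) = I(F F^c) is the normal function of f. -/
open Quaternion

lemma unitIm (J : Quaternion ℝ) (hJ : J ^ 2 = -1) :
    Quaternion.normSq J = 1 ∧ star J = -J := by
  have h1 : normSq J * normSq J = 1 := by
    have := congrArg normSq hJ
    simpa [pow_two, map_mul] using this
  have hns : normSq J = 1 := by nlinarith [Quaternion.normSq_nonneg (a := J)]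
  refine ⟨hns, ?_⟩
  rw [Quaternion.star_eq_neg, ← Quaternion.sq_eq_neg_normSq, hns]
  simpa using hJ

/-- The zero set of the symmetrization `N(f) = I(FF^c)` is the circularization of the
zero set of `f`: on each sphere of `Ω_D`, `N(f)` vanishes iff `f` has a zero on that
sphere. -/
theorem zero_set_of_normal_function (D : Set ℂ) (hD : IsOpen D)
    (hsym : ∀ z ∈ D, (starRingEnd ℂ) z ∈ D)
    (F₁ F₂ : ℂ → Quaternion ℝ)
    (hstem : ∀ z ∈ D, F₁ ((starRingEnd ℂ) z) = F₁ z ∧ F₂ ((starRingEnd ℂ) z) = -F₂ z)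
    (f n : Quaternion ℝ → Quaternion ℝ)
    (hf : ∀ (I : Quaternion ℝ), I ^ 2 = -1 → ∀ α β : ℝ, (α : ℂ) + β * Complex.I ∈ D →
      f ((α : Quaternion ℝ) + β • I)
        = F₁ ((α : ℂ) + β * Complex.I) + I * F₂ ((α : ℂ) + β * Complex.I))
    (hn : ∀ (I : Quaternion ℝ), I ^ 2 = -1 → ∀ α β : ℝ, (α : ℂ) + β * Complex.I ∈ D →
      n ((α : Quaternion ℝ) + β • I)
        = (F₁ ((α : ℂ) + β * Complex.I) * star (F₁ ((α : ℂ) + β * Complex.I))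
            - F₂ ((α : ℂ) + β * Complex.I) * star (F₂ ((α : ℂ) + β * Complex.I)))
          + I * (F₁ ((α : ℂ) + β * Complex.I) * star (F₂ ((α : ℂ) + β * Complex.I))
            + F₂ ((α : ℂ) + β * Complex.I) * star (F₁ ((α : ℂ) + β * Complex.I)))) :
    ∀ (J : Quaternion ℝ), J ^ 2 = -1 → ∀ α β : ℝ, (α : ℂ) + β * Complex.I ∈ D →
      (n ((α : Quaternion ℝ) + β • J) = 0 ↔
        ∃ I : Quaternion ℝ, I ^ 2 = -1 ∧ f ((α : Quaternion ℝ) + β • I) = 0) := by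
  intro J hJ α β hz
  set z : ℂ := (α : ℂ) + β * Complex.I with hzdef
  set a : Quaternion ℝ := F₁ z with ha
  set b : Quaternion ℝ := F₂ z with hb
  have hnv := hn J hJ α β hz
  obtain ⟨hJns, hJstar⟩ := unitIm J hJ
  constructor
  · intro h0
    rw [hnv] at h0
    set c : ℝ := 2 * (a * star b).re with hc
    have hs : a * star b + b * star a = ((c : ℝ) : Quaternion ℝ) := by
      have := Quaternion.self_add_star' (a * star b)
      rwa [star_mul, star_star] at this
    have hsq : a * star a = ((normSq a : ℝ) : Quaternion ℝ) := Quaternion.self_mul_star a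
    have hsqb : b * star b = ((normSq b : ℝ) : Quaternion ℝ) := Quaternion.self_mul_star b
    rw [hsq, hsqb, hs] at h0
    have hJre : J.re = 0 := by
      have := congrArg QuaternionAlgebra.re hJstar
      simp at this; linarith
    have hre : normSq a - normSq b + J.re * c = 0 := by
      have := congrArg QuaternionAlgebra.re h0
      simpa [Quaternion.re_mul] using this
    have hab : normSq a = normSq b := by
      rw [hJre] at hre; linarith
    have hc0 : c = 0 := by
      have hJc : J * ((c : ℝ) : Quaternion ℝ) = 0 := by
        have hd : ((normSq a : ℝ) : Quaternion ℝ) - ((normSq b : ℝ) : Quaternion ℝ) = 0 := by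
          rw [hab]; simp
        rw [hd, zero_add] at h0
        exact h0
      have hJ0 : J ≠ 0 := by
        intro h; rw [h] at hJ; simp at hJ
      rcases mul_eq_zero.mp hJc with h | h
      · exact absurd h hJ0
      · simpa using congrArg QuaternionAlgebra.re h
    have hs0 : a * star b + b * star a = 0 := by rw [hs, hc0]; simp
    by_cases hbz : b = 0
    · have : normSq a = 0 := by rw [hab, hbz]; simp
      have haz : a = 0 := Quaternion.normSq_eq_zero.mp this
      refine ⟨J, hJ, ?_⟩
      rw [hf J hJ α β hz, ← ha, ← hb, haz, hbz]
      simp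
    · have hnb : normSq b ≠ 0 := Quaternion.normSq_ne_zero.mpr hbz
      set I : Quaternion ℝ := -((((normSq b)⁻¹ : ℝ) : Quaternion ℝ) * (a * star b)) with hI
      have hbsa : b * star a = -(a * star b) := by
        have h := hs0; rwa [add_comm, add_eq_zero_iff_eq_neg] at h
      have hIstar : star I = -I := by
        rw [hI, star_neg, star_mul, star_mul, star_star, Quaternion.star_coe,
          ← Quaternion.coe_commutes, hbsa]
        noncomm_ring
      have hIns : normSq I = 1 := by
        rw [hI, Quaternion.normSq_neg, map_mul, map_mul, Quaternion.normSq_coe,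
          Quaternion.normSq_star, hab]
        field_simp
      have hI2 : I ^ 2 = -1 := by
        have hms : I * star I = ((normSq I : ℝ) : Quaternion ℝ) := Quaternion.self_mul_star I
        rw [hIstar, hIns] at hms
        have h' : -(I * I) = 1 := by rw [← mul_neg]; simpa using hms
        have : I * I = -1 := by
          have := congrArg Neg.neg h'
          simpa using this
        rw [pow_two, this]
      refine ⟨I, hI2, ?_⟩
      rw [hf I hI2 α β hz, ← ha, ← hb, hI]
      have hsbb : star b * b = ((normSq b : ℝ) : Quaternion ℝ) := Quaternion.star_mul_self b
      have key : ((((normSq b)⁻¹ : ℝ) : Quaternion ℝ) * (a * star b)) * b = a := by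
        rw [mul_assoc, mul_assoc, hsbb, Quaternion.mul_coe_eq_smul,
          Quaternion.coe_mul_eq_smul, smul_smul, inv_mul_cancel₀ hnb, one_smul]
      rw [neg_mul, key]
      simp
  · rintro ⟨I, hI, hfI⟩
    rw [hf I hI α β hz, ← ha, ← hb] at hfI
    obtain ⟨hIns, hIstar⟩ := unitIm I hI
    have haI : a = -(I * b) := eq_neg_of_add_eq_zero_left hfI
    rw [hnv, ← ha, ← hb]
    have h1 : a * star a = b * star b := by
      rw [Quaternion.self_mul_star, Quaternion.self_mul_star]
      norm_cast
      rw [haI, Quaternion.normSq_neg, map_mul, hIns, one_mul]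
    have hsa : star a = star b * I := by
      rw [haI, star_neg, star_mul, hIstar]
      noncomm_ring
    have e1 : a * star b = -(I * ((normSq b : ℝ) : Quaternion ℝ)) := by
      rw [haI, neg_mul, mul_assoc, Quaternion.self_mul_star]
    have e2 : b * star a = ((normSq b : ℝ) : Quaternion ℝ) * I := by
      rw [hsa, ← mul_assoc, Quaternion.self_mul_star]
    have h2 : a * star b + b * star a = 0 := by
      rw [e1, e2, Quaternion.coe_commutes]
      simp
    rw [h1, h2]
    simp
end

section
/- Identity principle without real points: let Ω_D be a connected circular open set in ℍ and f = I(F) ∈ SR(Ω_D) a slice regular function. If there exist J ≠ K in S such that both V(f) ∩ D_J⁺ and V(f) ∩ D_K⁺ have an accumulation point (in D_J⁺ resp. D_K⁺), then f ≡ 0 on Ω_D. -/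
open Filter
open Quaternion Topology

/-- The circular set `Ω_D ⊆ ℍ` associated with `D ⊆ ℂ`. -/
def circularSet (D : Set ℂ) : Set (Quaternion ℝ) :=
  {x | ∃ α β : ℝ, ∃ I : Quaternion ℝ, I ^ 2 = -1 ∧ (α : ℂ) + β * Complex.I ∈ D ∧
    x = (α : Quaternion ℝ) + β • I}

/-- The half slice `D_J⁺ = Ω_D ∩ ℂ_J⁺`. -/
def halfSlice (D : Set ℂ) (J : Quaternion ℝ) : Set (Quaternion ℝ) :=
  {x | ∃ α β : ℝ, 0 ≤ β ∧ (α : ℂ) + β * Complex.I ∈ D ∧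
    x = (α : Quaternion ℝ) + β • J}

noncomputable section IdAux

lemma sq_neg_one_re {q : Quaternion ℝ} (h : q ^ 2 = -1) :
    q.re = 0 ∧ q.imI ^ 2 + q.imJ ^ 2 + q.imK ^ 2 = 1 := by
  rw [sq, Quaternion.ext_iff] at h
  simp only [Quaternion.re_mul, Quaternion.imI_mul, Quaternion.imJ_mul, Quaternion.imK_mul,
    Quaternion.re_neg, Quaternion.imI_neg, Quaternion.imJ_neg, Quaternion.imK_neg,
    Quaternion.re_one, Quaternion.imI_one, Quaternion.imJ_one, Quaternion.imK_one] at h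
  obtain ⟨h0, h1, h2, h3⟩ := h
  have hre : q.re = 0 := by
    nlinarith [sq_nonneg q.re, sq_nonneg q.imI, sq_nonneg q.imJ, sq_nonneg q.imK,
      sq_nonneg (q.re * q.imI), sq_nonneg (q.re * q.imJ), sq_nonneg (q.re * q.imK)]
  exact ⟨hre, by nlinarith⟩

lemma norm_of_sq_neg_one {q : Quaternion ℝ} (h : q ^ 2 = -1) : ‖q‖ = 1 := by
  obtain ⟨h0, h1⟩ := sq_neg_one_re h
  have : Quaternion.normSq q = 1 := by
    rw [Quaternion.normSq_def']; nlinarith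
  have h2 : ‖q‖ * ‖q‖ = 1 := by rw [← Quaternion.normSq_eq_norm_mul_self, this]
  nlinarith [norm_nonneg q]

end IdAux
noncomputable section IdAux2

/-- The slice embedding `ℂ → ℍ` associated to an imaginary unit `J`. -/
def sliceMap (J : Quaternion ℝ) : ℂ →ₗ[ℝ] Quaternion ℝ where
  toFun z := (z.re : Quaternion ℝ) + z.im • J
  map_add' z w := by
    simp only [Complex.add_re, Complex.add_im, Quaternion.coe_add, add_smul]
    abel
  map_smul' r z := by
    simp only [Complex.smul_re, Complex.smul_im, RingHom.id_apply, smul_eq_mul,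
      Quaternion.coe_mul, smul_smul]
    rw [smul_add]
    congr 1
    · norm_cast
    · rw [smul_smul]

lemma sliceMap_injective {J : Quaternion ℝ} (hJ : J ^ 2 = -1) :
    Function.Injective (sliceMap J) := by
  obtain ⟨h0, h1⟩ := sq_neg_one_re hJ
  intro z w h
  have h' : (((z-w).re : ℝ) : Quaternion ℝ) + (z-w).im • J = 0 := by
    simp only [Complex.sub_re, Complex.sub_im, Quaternion.coe_sub, sub_smul]
    have : sliceMap J z = sliceMap J w := h
    simp only [sliceMap, LinearMap.coe_mk, AddHom.coe_mk] at this
    rw [sub_add_sub_comm, this, sub_self]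
  rw [Quaternion.ext_iff] at h'
  simp only [Quaternion.re_add, Quaternion.imI_add, Quaternion.imJ_add, Quaternion.imK_add,
    Quaternion.re_coe, Quaternion.imI_coe, Quaternion.imJ_coe, Quaternion.imK_coe,
    Quaternion.re_smul, Quaternion.imI_smul, Quaternion.imJ_smul, Quaternion.imK_smul,
    Quaternion.re_zero, Quaternion.imI_zero, Quaternion.imJ_zero, Quaternion.imK_zero,
    smul_eq_mul, h0, mul_zero, add_zero, zero_add] at h'
  obtain ⟨e0, e1, e2, e3⟩ := h'
  have him : (z - w).im = 0 := by nlinarith [sq_nonneg ((z-w).im)]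
  have : z - w = 0 := Complex.ext e0 him
  exact sub_eq_zero.mp this

end IdAux2
noncomputable section IdAux3

lemma accPt_of_image {ψ : ℂ → Quaternion ℝ} (hinj : Function.Injective ψ)
    (hn : ∀ z : ℂ, 𝓝 z = Filter.comap ψ (𝓝 (ψ z)))
    {z : ℂ} {T : Set ℂ} (h : AccPt (ψ z) (𝓟 (ψ '' T))) : AccPt z (𝓟 T) := by
  unfold AccPt at h ⊢
  have key : 𝓝[≠] z ⊓ 𝓟 T = Filter.comap ψ (𝓝[≠] (ψ z) ⊓ 𝓟 (ψ '' T)) := by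
    rw [nhdsWithin, nhdsWithin, Filter.comap_inf, Filter.comap_inf, Filter.comap_principal,
      Filter.comap_principal, hn z, Set.preimage_image_eq T hinj]
    have hpre : (ψ ⁻¹' {ψ z}ᶜ) = {z}ᶜ := by
      ext w
      simp [hinj.eq_iff]
    rw [hpre]
  rw [key]
  haveI := h
  rw [Filter.comap_neBot_iff]
  intro U hU
  have hmem : U ∩ (ψ '' T) ∈ 𝓝[≠] (ψ z) ⊓ 𝓟 (ψ '' T) :=
    Filter.inter_mem hU (by exact Filter.mem_inf_of_right (Filter.mem_principal_self _))
  obtain ⟨y, hyU, w, _, rfl⟩ := Filter.nonempty_of_mem hmem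
  exact ⟨w, hyU⟩

lemma sliceMap_nhds {J : Quaternion ℝ} (hJ : J ^ 2 = -1) (z : ℂ) :
    𝓝 z = Filter.comap (sliceMap J) (𝓝 (sliceMap J z)) := by
  have hker : LinearMap.ker (sliceMap J) = ⊥ :=
    LinearMap.ker_eq_bot.mpr (sliceMap_injective hJ)
  have := (LinearMap.isClosedEmbedding_of_injective hker)
  exact this.toIsEmbedding.toIsInducing.nhds_eq_comap z

end IdAux3
noncomputable section IdAux4

lemma cdiff_of_CR {g : ℂ → ℂ} {L : ℂ →L[ℝ] ℂ} {z : ℂ}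
    (h : HasFDerivAt g L z) (hCR : L Complex.I = Complex.I * L 1) :
    DifferentiableAt ℂ g z := by
  set L' : ℂ →L[ℂ] ℂ := (L 1) • (ContinuousLinearMap.id ℂ ℂ) with hL'
  have hL : L'.restrictScalars ℝ = L := by
    ext w
    have hw : w = w.re • (1:ℂ) + w.im • Complex.I := by simp [Complex.real_smul]
    have hLw : (L'.restrictScalars ℝ) w = L 1 * w := rfl
    conv_rhs => rw [hw]
    rw [hLw, map_add, map_smul, map_smul, hCR]
    have h2 : L 1 * w = (↑w.re + ↑w.im * Complex.I) * L 1 := by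
      rw [Complex.re_add_im]; ring
    rw [h2, Complex.real_smul, Complex.real_smul]
    ring
  exact (hasFDerivAt_of_restrictScalars ℝ h hL).differentiableAt

lemma holo_goo {F₁ F₂ : ℂ → Quaternion ℝ} {z : ℂ}
    (hF₁ : DifferentiableAt ℝ F₁ z) (hF₂ : DifferentiableAt ℝ F₂ z)
    (hCR1 : fderiv ℝ F₁ z 1 = fderiv ℝ F₂ z Complex.I)
    (hCR2 : fderiv ℝ F₁ z Complex.I = -(fderiv ℝ F₂ z 1))
    (q : Quaternion ℝ) (c : (Quaternion ℝ) →L[ℝ] ℝ) :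
    DifferentiableAt ℂ (fun w => ((c (q * F₁ w - F₂ w) : ℝ) : ℂ)
      + ((c (F₁ w + q * F₂ w) : ℝ) : ℂ) * Complex.I) z := by
  have hA : HasFDerivAt F₁ (fderiv ℝ F₁ z) z := hF₁.hasFDerivAt
  have hB : HasFDerivAt F₂ (fderiv ℝ F₂ z) z := hF₂.hasFDerivAt
  have hu := c.hasFDerivAt.comp z ((hA.const_mul q).sub hB)
  have hv := c.hasFDerivAt.comp z (hA.add (hB.const_mul q))
  have h1 := Complex.ofRealCLM.hasFDerivAt.comp z hu
  have h2 := (Complex.ofRealCLM.hasFDerivAt.comp z hv).mul_const' Complex.I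
  have hg := h1.add h2
  apply cdiff_of_CR hg
  have e1 : fderiv ℝ F₂ z Complex.I = fderiv ℝ F₁ z 1 := hCR1.symm
  simp only [ContinuousLinearMap.add_apply, ContinuousLinearMap.comp_apply,
    ContinuousLinearMap.smulRight_apply, ContinuousLinearMap.sub_apply,
    ContinuousLinearMap.smul_apply, Complex.ofRealCLM_apply, hCR2, e1,
    smul_eq_mul, op_smul_eq_mul, map_sub, map_add, map_neg, mul_neg, neg_mul]
  linear_combination (-(((c (q * (fderiv ℝ F₂ z) 1) : ℝ) : ℂ)) - ((c ((fderiv ℝ F₁ z) 1) : ℝ) : ℂ)) * Complex.I_sq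
end IdAux4
noncomputable section IdAux5

lemma slice_re {I : Quaternion ℝ} (hI : I ^ 2 = -1) (α β : ℝ) :
    ((α : Quaternion ℝ) + β • I).re = α := by
  obtain ⟨h0, _⟩ := sq_neg_one_re hI
  simp [h0]

lemma slice_norm_im {I : Quaternion ℝ} (hI : I ^ 2 = -1) (α β : ℝ) :
    ‖((α : Quaternion ℝ) + β • I).im‖ = |β| := by
  obtain ⟨h0, _⟩ := sq_neg_one_re hI
  have him : ((α : Quaternion ℝ) + β • I).im = β • I := by
    ext <;> simp [h0]
  rw [him, norm_smul, norm_of_sq_neg_one hI, mul_one, Real.norm_eq_abs]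

lemma mk_re_im (α β : ℝ) : ((α : ℂ) + β * Complex.I).re = α ∧ ((α : ℂ) + β * Complex.I).im = β := by
  simp

end IdAux5


/-- Identity principle for slice regular functions on domains without real points:
if the zero set of `f` has an accumulation point in two distinct half slices
`D_J⁺`, `D_K⁺`, then `f ≡ 0` on `Ω_D`. -/
theorem identity_principle (D : Set ℂ) (hD : IsOpen D)
    (hsym : ∀ z ∈ D, (starRingEnd ℂ) z ∈ D)
    (F₁ F₂ : ℂ → Quaternion ℝ)
    (hstem : ∀ z ∈ D, F₁ ((starRingEnd ℂ) z) = F₁ z ∧ F₂ ((starRingEnd ℂ) z) = -F₂ z)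
    (hreg : ∀ z ∈ D, DifferentiableAt ℝ F₁ z ∧ DifferentiableAt ℝ F₂ z ∧
      fderiv ℝ F₁ z 1 = fderiv ℝ F₂ z Complex.I ∧
      fderiv ℝ F₁ z Complex.I = -(fderiv ℝ F₂ z 1))
    (hconn : IsConnected (circularSet D))
    (f : Quaternion ℝ → Quaternion ℝ)
    (hf : ∀ (I : Quaternion ℝ), I ^ 2 = -1 → ∀ α β : ℝ, (α : ℂ) + β * Complex.I ∈ D →
      f ((α : Quaternion ℝ) + β • I)
        = F₁ ((α : ℂ) + β * Complex.I) + I * F₂ ((α : ℂ) + β * Complex.I))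
    (J K : Quaternion ℝ) (hJ : J ^ 2 = -1) (hK : K ^ 2 = -1) (hJK : J ≠ K)
    (haccJ : ∃ p ∈ halfSlice D J,
      AccPt p (𝓟 ({x | f x = 0} ∩ halfSlice D J)))
    (haccK : ∃ p ∈ halfSlice D K,
      AccPt p (𝓟 ({x | f x = 0} ∩ halfSlice D K))) :
    ∀ x ∈ circularSet D, f x = 0 := by
  classical
  -- the closed upper part of D
  set Dp : Set ℂ := {z : ℂ | z ∈ D ∧ 0 ≤ z.im} with hDp_def
  -- Dp is connected, being the image of the circular set
  have hDp_pre : IsPreconnected Dp := by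
    set ρ : Quaternion ℝ → ℂ := fun x => ((x.re : ℂ) + (‖x.im‖ : ℂ) * Complex.I) with hρ_def
    have hρ_cont : Continuous ρ := by
      apply Continuous.add
      · exact Complex.continuous_ofReal.comp Quaternion.continuous_re
      · exact (Complex.continuous_ofReal.comp
          (continuous_norm.comp Quaternion.continuous_im)).mul continuous_const
    have himg : ρ '' circularSet D = Dp := by
      apply Set.Subset.antisymm
      · rintro - ⟨x, ⟨α, β, I, hI, hzD, rfl⟩, rfl⟩
        have h1 := slice_re hI α β
        have h2 := slice_norm_im hI α β
        have hρx : ρ ((α : Quaternion ℝ) + β • I) = (α : ℂ) + ((|β| : ℝ) : ℂ) * Complex.I := by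
          simp only [hρ_def]
          rw [h1, h2]
        rcases le_or_gt 0 β with hβ | hβ
        · rw [hρx, abs_of_nonneg hβ]
          exact ⟨hzD, by simpa using hβ⟩
        · rw [hρx, abs_of_neg hβ]
          refine ⟨?_, by simpa using le_of_lt (neg_pos.mpr hβ)⟩
          have hmem := hsym _ hzD
          have hconj : (starRingEnd ℂ) ((α : ℂ) + β * Complex.I)
              = (α : ℂ) + ((-β : ℝ) : ℂ) * Complex.I := by
            simp [Complex.ext_iff]
          rwa [hconj] at hmem
      · rintro z ⟨hzD, hzim⟩
        refine ⟨(z.re : Quaternion ℝ) + z.im • J, ⟨z.re, z.im, J, hJ, by rwa [Complex.re_add_im], rfl⟩, ?_⟩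
        rw [hρ_def]
        simp only [slice_re hJ, slice_norm_im hJ, abs_of_nonneg hzim]
        exact Complex.re_add_im z
    rw [← himg]
    exact (hconn.image ρ hρ_cont.continuousOn).isPreconnected
  have hDpD : Dp ⊆ D := fun z hz => hz.1
  -- set up the two accumulation points
  obtain ⟨p, hp, haccJ⟩ := haccJ
  obtain ⟨αJ, βJ, hβJ, hzDJ, rfl⟩ := hp
  set zJ : ℂ := (αJ : ℂ) + βJ * Complex.I with hzJ_def
  obtain ⟨p, hp, haccK⟩ := haccK
  obtain ⟨αK, βK, hβK, hzDK, rfl⟩ := hp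
  set zK : ℂ := (αK : ℂ) + βK * Complex.I with hzK_def
  have hzJDp : zJ ∈ Dp := ⟨hzDJ, by simpa [hzJ_def] using hβJ⟩
  have hzKDp : zK ∈ Dp := ⟨hzDK, by simpa [hzK_def] using hβK⟩
  -- the connected component
  set C : Set ℂ := connectedComponentIn D zJ with hC_def
  have hCopen : IsOpen C := hD.connectedComponentIn
  have hCpre : IsPreconnected C := isPreconnected_connectedComponentIn
  have hCD : C ⊆ D := connectedComponentIn_subset D zJ
  have hDpC : Dp ⊆ C := hDp_pre.subset_connectedComponentIn hzJDp hDpD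
  have hzJC : zJ ∈ C := hDpC hzJDp
  have hzKC : zK ∈ C := hDpC hzKDp
  -- transfer the accumulation hypotheses to ℂ
  have transfer : ∀ (q : Quaternion ℝ) (hq : q ^ 2 = -1) (α β : ℝ), 0 ≤ β →
      (α : ℂ) + β * Complex.I ∈ D →
      AccPt ((α : Quaternion ℝ) + β • q) (𝓟 ({x | f x = 0} ∩ halfSlice D q)) →
      AccPt ((α : ℂ) + β * Complex.I) (𝓟 {z : ℂ | z ∈ D ∧ F₁ z + q * F₂ z = 0}) := by
    intro q hq α β hβ hzD hacc
    have hpsi : sliceMap q ((α : ℂ) + β * Complex.I) = (α : Quaternion ℝ) + β • q := by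
      simp [sliceMap]
    apply accPt_of_image (sliceMap_injective hq) (sliceMap_nhds hq)
    rw [hpsi]
    apply hacc.mono
    rw [Filter.principal_mono]
    rintro x ⟨hfx, α', β', hβ', hz'D, rfl⟩
    refine ⟨(α' : ℂ) + β' * Complex.I, ⟨hz'D, ?_⟩, by simp [sliceMap]⟩
    rw [← hf q hq α' β' hz'D]
    exact hfx
  have haccJ' := transfer J hJ αJ βJ hβJ hzDJ haccJ
  have haccK' := transfer K hK αK βK hβK hzDK haccK
  -- main analytic step
  have key : ∀ (q : Quaternion ℝ), q ^ 2 = -1 → ∀ z0 ∈ C,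
      AccPt z0 (𝓟 {z : ℂ | z ∈ D ∧ F₁ z + q * F₂ z = 0}) →
      ∀ z ∈ C, F₁ z + q * F₂ z = 0 := by
    intro q hq z0 hz0 hacc z hzC
    have hdual : ∀ c : (Quaternion ℝ) →L[ℝ] ℝ, c (F₁ z + q * F₂ z) = 0 := by
      intro c
      set g : ℂ → ℂ := fun w => ((c (q * F₁ w - F₂ w) : ℝ) : ℂ)
        + ((c (F₁ w + q * F₂ w) : ℝ) : ℂ) * Complex.I with hg_def
      have hgD : DifferentiableOn ℂ g D := fun w hw =>
        (holo_goo (hreg w hw).1 (hreg w hw).2.1 (hreg w hw).2.2.1 (hreg w hw).2.2.2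
          q c).differentiableWithinAt
      have hganal : AnalyticOnNhd ℂ g C := fun w hw => (hgD.analyticOnNhd hD) w (hCD hw)
      have hgzero : ∀ w : ℂ, F₁ w + q * F₂ w = 0 → g w = 0 := by
        intro w hw
        have hre : q * F₁ w - F₂ w = q * (F₁ w + q * F₂ w) := by
          rw [mul_add, ← mul_assoc, ← sq, hq, neg_one_mul, ← sub_eq_add_neg]
        rw [hg_def]
        simp only [hre, hw, mul_zero, map_zero, Complex.ofReal_zero, zero_mul, add_zero]
      have hfreq : ∃ᶠ w in 𝓝[≠] z0, g w = 0 := by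
        rw [accPt_iff_frequently] at hacc
        rw [frequently_nhdsWithin_iff]
        apply hacc.mono
        rintro y ⟨hy1, hy2, hy3⟩
        exact ⟨hgzero y hy3, hy1⟩
      have hEq := hganal.eqOn_zero_of_preconnected_of_frequently_eq_zero hCpre hz0 hfreq
      have hgz : g z = 0 := hEq hzC
      have him : (g z).im = 0 := by rw [hgz]; rfl
      rw [hg_def] at him
      simpa using him
    exact NormedSpace.eq_zero_of_forall_dual_eq_zero ℝ hdual
  have hJall : ∀ z ∈ C, F₁ z + J * F₂ z = 0 := key J hJ zJ hzJC haccJ'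
  have hKall : ∀ z ∈ C, F₁ z + K * F₂ z = 0 := key K hK zK hzKC haccK'
  -- F₁ and F₂ vanish on C
  have hF2 : ∀ z ∈ C, F₂ z = 0 := by
    intro z hz
    have h1 := hJall z hz
    have h2 := hKall z hz
    have h3 : (J - K) * F₂ z = 0 := by
      rw [sub_mul]
      have : J * F₂ z = K * F₂ z := by
        have := sub_eq_zero.mpr (h1.trans h2.symm)
        -- F₁ z + J * F₂ z = F₁ z + K * F₂ z
        have h4 : F₁ z + J * F₂ z = F₁ z + K * F₂ z := h1.trans h2.symm
        exact add_left_cancel h4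
      rw [this, sub_self]
    rcases mul_eq_zero.mp h3 with h | h
    · exact absurd (sub_eq_zero.mp h) hJK
    · exact h
  have hF1 : ∀ z ∈ C, F₁ z = 0 := by
    intro z hz
    have h1 := hJall z hz
    rw [hF2 z hz, mul_zero, add_zero] at h1
    exact h1
  -- F₁ and F₂ vanish on all of D
  have hzero : ∀ z ∈ D, F₁ z = 0 ∧ F₂ z = 0 := by
    intro z hz
    rcases le_or_gt 0 z.im with him | him
    · have hzC : z ∈ C := hDpC ⟨hz, him⟩
      exact ⟨hF1 z hzC, hF2 z hzC⟩
    · have hz' : (starRingEnd ℂ) z ∈ D := hsym z hz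
      have hc : (starRingEnd ℂ) z ∈ C := by
        apply hDpC
        refine ⟨hz', ?_⟩
        simp only [Complex.conj_im]
        linarith
      obtain ⟨e1, e2⟩ := hstem z hz
      refine ⟨?_, ?_⟩
      · rw [← e1]; exact hF1 _ hc
      · have h5 : F₂ ((starRingEnd ℂ) z) = 0 := hF2 _ hc
        rw [e2] at h5
        exact neg_eq_zero.mp h5
  rintro x ⟨α, β, I, hI, hzD, rfl⟩
  rw [hf I hI α β hzD, (hzero _ hzD).1, (hzero _ hzD).2, mul_zero, add_zero]
end

section
/- Mean value property on a slice: let f = I(F) be slice regular on Ω_D, I ∈ S, a = γ + δI ∈ D_I⁺ with δ > 0, and r > 0 with the closed disc of center a and radius r contained in D_I⁺. Then f(a) = (1/2π) ∫₀^{2π} f(a + r e^{Iθ}) dθ. -/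
open Complex Metric Set intervalIntegral Real



-- Step 1: mean value for complex holomorphic functions
lemma mv_complex {D : Set ℂ} (hD : IsOpen D) {h : ℂ → ℂ}
    (hd : ∀ z ∈ D, DifferentiableAt ℂ h z) {c : ℂ} {r : ℝ} (hr : 0 < r)
    (hsub : closedBall c r ⊆ D) :
    h c = (2 * Real.pi)⁻¹ • ∫ θ in (0:ℝ)..(2*Real.pi), h (circleMap c r θ) := by
  have hc : ContinuousOn h (closedBall c r) := fun z hz => ((hd z (hsub hz)).continuousAt).continuousWithinAt
  have hmem : c ∈ ball c r := mem_ball_self hr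
  have key := Complex.two_pi_I_inv_smul_circleIntegral_sub_inv_smul_of_differentiable_on_off_countable
    (s := ∅) countable_empty hmem hc (fun x hx => hd x (hsub (ball_subset_closedBall hx.1)))
  rw [← key]
  rw [circleIntegral]
  have : ∀ θ : ℝ, deriv (circleMap c r) θ • (circleMap c r θ - c)⁻¹ • h (circleMap c r θ)
      = Complex.I * h (circleMap c r θ) := by
    intro θ
    rw [deriv_circleMap, circleMap_sub_center, smul_eq_mul, smul_eq_mul]
    have h0 : circleMap 0 r θ ≠ 0 := by
      simpa using circleMap_ne_center (c := 0) hr.ne' (θ := θ)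
    field_simp
  rw [intervalIntegral.integral_congr (fun θ _ => this θ), intervalIntegral.integral_const_mul]
  rw [Complex.real_smul, smul_eq_mul, ← mul_assoc]
  push_cast
  congr 1
  have hpi : (Real.pi : ℂ) ≠ 0 := by exact_mod_cast Real.pi_ne_zero
  field_simp


lemma hol_L {D : Set ℂ} (F₁ F₂ : ℂ → Quaternion ℝ)
    (hreg : ∀ z ∈ D, DifferentiableAt ℝ F₁ z ∧ DifferentiableAt ℝ F₂ z ∧
      fderiv ℝ F₁ z 1 = fderiv ℝ F₂ z Complex.I ∧
      fderiv ℝ F₁ z Complex.I = -(fderiv ℝ F₂ z 1))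
    (L : Quaternion ℝ →L[ℝ] ℝ) :
    ∀ z ∈ D, DifferentiableAt ℂ (fun z => ((L (F₁ z) : ℝ) : ℂ) + (L (F₂ z)) • Complex.I) z := by
  intro z hz
  obtain ⟨hd1, hd2, hcr1, hcr2⟩ := hreg z hz
  set F₁' := fderiv ℝ F₁ z with hF₁'
  set F₂' := fderiv ℝ F₂ z with hF₂'
  set G : ℂ →L[ℝ] ℂ :=
    Complex.ofRealCLM.comp (L.comp F₁') + (L.comp F₂').smulRight Complex.I with hGdef
  have hG : HasFDerivAt (fun z => ((L (F₁ z) : ℝ) : ℂ) + (L (F₂ z)) • Complex.I) G z := by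
    have h1 : HasFDerivAt (fun z => ((L (F₁ z) : ℝ) : ℂ))
        (Complex.ofRealCLM.comp (L.comp F₁')) z :=
      Complex.ofRealCLM.hasFDerivAt.comp z (L.hasFDerivAt.comp z hd1.hasFDerivAt)
    have h2 : HasFDerivAt (fun z => (L (F₂ z)) • Complex.I)
        ((L.comp F₂').smulRight Complex.I) z :=
      (L.hasFDerivAt.comp z hd2.hasFDerivAt).smul_const Complex.I
    exact h1.add h2
  have hGapp : ∀ v : ℂ, G v = ((L (F₁' v) : ℝ) : ℂ) + (L (F₂' v)) • Complex.I := by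
    intro v; simp [hGdef]
  have hCR : G Complex.I = Complex.I * G 1 := by
    rw [hGapp, hGapp, hcr2]
    have h21 : F₂' Complex.I = F₁' 1 := by rw [hcr1]
    rw [h21]
    simp only [map_neg]
    rw [Complex.real_smul, Complex.real_smul]
    push_cast
    ring_nf
    rw [Complex.I_sq]
    ring
  refine (differentiableAt_iff_restrictScalars ℝ hG.differentiableAt).2
    ⟨(ContinuousLinearMap.id ℂ ℂ).smulRight (G 1), ?_⟩
  rw [hG.fderiv]
  ext w
  simp only [ContinuousLinearMap.coe_restrictScalars', ContinuousLinearMap.smulRight_apply,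
    ContinuousLinearMap.id_apply, smul_eq_mul]
  have hw : (w : ℂ) = w.re • (1:ℂ) + w.im • Complex.I := by
    rw [Complex.real_smul, Complex.real_smul, mul_one, Complex.re_add_im]
  calc w * G 1 = (w.re • (1:ℂ) + w.im • Complex.I) * G 1 := by rw [← hw]
    _ = w.re • G 1 + w.im • (Complex.I * G 1) := by
        rw [Complex.real_smul, Complex.real_smul, Complex.real_smul, Complex.real_smul]; ring
    _ = w.re • G 1 + w.im • G Complex.I := by rw [hCR]
    _ = G (w.re • (1:ℂ) + w.im • Complex.I) := by rw [map_add, map_smul, map_smul]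
    _ = G w := by rw [← hw]


/-- Mean value property on a half slice: for a slice regular function `f`, `I ∈ S`,
`a = γ + δI ∈ D_I⁺` and `r > 0` with the closed disc of center `a` and radius `r`
contained in `D_I⁺`, one has `f(a) = (1/2π) ∫₀^{2π} f(a + r e^{Iθ}) dθ`. -/
theorem mean_value_property (D : Set ℂ) (hD : IsOpen D)
    (hsym : ∀ z ∈ D, (starRingEnd ℂ) z ∈ D)
    (F₁ F₂ : ℂ → Quaternion ℝ)
    (hstem : ∀ z ∈ D, F₁ ((starRingEnd ℂ) z) = F₁ z ∧ F₂ ((starRingEnd ℂ) z) = -F₂ z)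
    (hreg : ∀ z ∈ D, DifferentiableAt ℝ F₁ z ∧ DifferentiableAt ℝ F₂ z ∧
      fderiv ℝ F₁ z 1 = fderiv ℝ F₂ z Complex.I ∧
      fderiv ℝ F₁ z Complex.I = -(fderiv ℝ F₂ z 1))
    (f : Quaternion ℝ → Quaternion ℝ)
    (hf : ∀ (I : Quaternion ℝ), I ^ 2 = -1 → ∀ α β : ℝ, (α : ℂ) + β * Complex.I ∈ D →
      f ((α : Quaternion ℝ) + β • I)
        = F₁ ((α : ℂ) + β * Complex.I) + I * F₂ ((α : ℂ) + β * Complex.I))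
    (I : Quaternion ℝ) (hI : I ^ 2 = -1) (γ δ r : ℝ) (hδ : 0 < δ) (hr : 0 < r)
    (hball : Metric.closedBall ((γ : ℂ) + δ * Complex.I) r ⊆ {z ∈ D | 0 ≤ z.im}) :
    f ((γ : Quaternion ℝ) + δ • I)
      = (2 * Real.pi)⁻¹ • ∫ θ in (0 : ℝ)..(2 * Real.pi),
          f (((γ + r * Real.cos θ : ℝ) : Quaternion ℝ) + (δ + r * Real.sin θ) • I) := by
  set c : ℂ := (γ : ℂ) + δ * Complex.I with hc
  have hsubD : closedBall c r ⊆ D := fun z hz => (hball hz).1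
  have hcD : c ∈ D := hsubD (mem_closedBall_self hr.le)
  have memD : ∀ θ : ℝ, circleMap c r θ ∈ D :=
    fun θ => hsubD (circleMap_mem_closedBall c hr.le θ)
  have zeq : ∀ θ : ℝ, ((γ + r * Real.cos θ : ℝ) : ℂ) + ((δ + r * Real.sin θ : ℝ)) * Complex.I
      = circleMap c r θ := by
    intro θ
    apply Complex.ext <;>
      simp [circleMap, hc, Complex.exp_ofReal_mul_I_re, Complex.exp_ofReal_mul_I_im,
        Complex.cos_ofReal_re, Complex.sin_ofReal_re]
  have contF₁ : Continuous fun θ : ℝ => F₁ (circleMap c r θ) :=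
    continuous_iff_continuousAt.2 fun θ =>
      ((hreg _ (memD θ)).1.continuousAt).comp (continuous_circleMap c r).continuousAt
  have contF₂ : Continuous fun θ : ℝ => F₂ (circleMap c r θ) :=
    continuous_iff_continuousAt.2 fun θ =>
      ((hreg _ (memD θ)).2.1.continuousAt).comp (continuous_circleMap c r).continuousAt
  have intF₁ : IntervalIntegrable (fun θ : ℝ => F₁ (circleMap c r θ))
      MeasureTheory.volume 0 (2 * Real.pi) := contF₁.intervalIntegrable _ _
  have intF₂ : IntervalIntegrable (fun θ : ℝ => F₂ (circleMap c r θ))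
      MeasureTheory.volume 0 (2 * Real.pi) := contF₂.intervalIntegrable _ _
  set A : Quaternion ℝ := ∫ θ in (0:ℝ)..(2 * Real.pi), F₁ (circleMap c r θ) with hA
  set B : Quaternion ℝ := ∫ θ in (0:ℝ)..(2 * Real.pi), F₂ (circleMap c r θ) with hB
  have key : ∀ L : Quaternion ℝ →L[ℝ] ℝ,
      L (F₁ c) = L ((2 * Real.pi)⁻¹ • A) ∧ L (F₂ c) = L ((2 * Real.pi)⁻¹ • B) := by
    intro L
    have hmv := mv_complex hD (hol_L F₁ F₂ hreg L) hr hsubD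
    have conth : Continuous fun θ : ℝ =>
        ((L (F₁ (circleMap c r θ)) : ℝ) : ℂ) + (L (F₂ (circleMap c r θ))) • Complex.I :=
      (Complex.continuous_ofReal.comp (L.continuous.comp contF₁)).add
        ((L.continuous.comp contF₂).smul continuous_const)
    have hinth : IntervalIntegrable (fun θ : ℝ =>
        ((L (F₁ (circleMap c r θ)) : ℝ) : ℂ) + (L (F₂ (circleMap c r θ))) • Complex.I)
        MeasureTheory.volume 0 (2 * Real.pi) := conth.intervalIntegrable _ _
    constructor
    · have h1 := congrArg Complex.re hmv
      simp only [Complex.add_re, Complex.ofReal_re, Complex.smul_re, Complex.I_re,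
        smul_eq_mul, mul_zero, add_zero] at h1
      rw [← Complex.reCLM_apply,
        ← Complex.reCLM.intervalIntegral_comp_comm hinth] at h1
      simp only [Complex.reCLM_apply, Complex.add_re, Complex.ofReal_re, Complex.smul_re,
        Complex.I_re, smul_eq_mul, mul_zero, add_zero] at h1
      rw [L.intervalIntegral_comp_comm intF₁] at h1
      rw [h1, map_smul, smul_eq_mul]
    · have h1 := congrArg Complex.im hmv
      simp only [Complex.add_im, Complex.ofReal_im, Complex.smul_im, Complex.I_im,
        smul_eq_mul, mul_one, zero_add] at h1
      rw [← Complex.imCLM_apply,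
        ← Complex.imCLM.intervalIntegral_comp_comm hinth] at h1
      simp only [Complex.imCLM_apply, Complex.add_im, Complex.ofReal_im, Complex.smul_im,
        Complex.I_im, smul_eq_mul, mul_one, zero_add] at h1
      rw [L.intervalIntegral_comp_comm intF₂] at h1
      rw [h1, map_smul, smul_eq_mul]
  have coordCLM : ∀ g : Quaternion ℝ →ₗ[ℝ] ℝ, ∃ L : Quaternion ℝ →L[ℝ] ℝ, ⇑L = ⇑g :=
    fun g => ⟨LinearMap.toContinuousLinearMap g, rfl⟩
  have eqF₁ : F₁ c = (2 * Real.pi)⁻¹ • A := by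
    apply QuaternionAlgebra.ext
    · obtain ⟨L, hL⟩ := coordCLM (QuaternionAlgebra.reₗ (R := ℝ) (-1 : ℝ) (0 : ℝ) (-1 : ℝ))
      have := (key L).1; rw [hL] at this; exact this
    · obtain ⟨L, hL⟩ := coordCLM (QuaternionAlgebra.imIₗ (R := ℝ) (-1 : ℝ) (0 : ℝ) (-1 : ℝ))
      have := (key L).1; rw [hL] at this; exact this
    · obtain ⟨L, hL⟩ := coordCLM (QuaternionAlgebra.imJₗ (R := ℝ) (-1 : ℝ) (0 : ℝ) (-1 : ℝ))
      have := (key L).1; rw [hL] at this; exact this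
    · obtain ⟨L, hL⟩ := coordCLM (QuaternionAlgebra.imKₗ (R := ℝ) (-1 : ℝ) (0 : ℝ) (-1 : ℝ))
      have := (key L).1; rw [hL] at this; exact this
  have eqF₂ : F₂ c = (2 * Real.pi)⁻¹ • B := by
    apply QuaternionAlgebra.ext
    · obtain ⟨L, hL⟩ := coordCLM (QuaternionAlgebra.reₗ (R := ℝ) (-1 : ℝ) (0 : ℝ) (-1 : ℝ))
      have := (key L).2; rw [hL] at this; exact this
    · obtain ⟨L, hL⟩ := coordCLM (QuaternionAlgebra.imIₗ (R := ℝ) (-1 : ℝ) (0 : ℝ) (-1 : ℝ))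
      have := (key L).2; rw [hL] at this; exact this
    · obtain ⟨L, hL⟩ := coordCLM (QuaternionAlgebra.imJₗ (R := ℝ) (-1 : ℝ) (0 : ℝ) (-1 : ℝ))
      have := (key L).2; rw [hL] at this; exact this
    · obtain ⟨L, hL⟩ := coordCLM (QuaternionAlgebra.imKₗ (R := ℝ) (-1 : ℝ) (0 : ℝ) (-1 : ℝ))
      have := (key L).2; rw [hL] at this; exact this
  have lhs : f ((γ : Quaternion ℝ) + δ • I) = F₁ c + I * F₂ c := hf I hI γ δ hcD
  have integrand : ∀ θ ∈ Set.uIcc (0:ℝ) (2 * Real.pi),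
      f (((γ + r * Real.cos θ : ℝ) : Quaternion ℝ) + (δ + r * Real.sin θ) • I)
        = F₁ (circleMap c r θ) + I * F₂ (circleMap c r θ) := by
    intro θ _
    have hmem : ((γ + r * Real.cos θ : ℝ) : ℂ) + ((δ + r * Real.sin θ : ℝ)) * Complex.I ∈ D := by
      rw [zeq θ]; exact memD θ
    rw [hf I hI _ _ hmem, zeq θ]
  rw [lhs, intervalIntegral.integral_congr integrand,
    intervalIntegral.integral_add intF₁ ((show Continuous fun θ : ℝ => I * F₂ (circleMap c r θ) from continuous_const.mul contF₂).intervalIntegrable _ _)]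
  have hmulB : (∫ θ in (0:ℝ)..(2 * Real.pi), I * F₂ (circleMap c r θ)) = I * B := by
    have := (ContinuousLinearMap.mul ℝ (Quaternion ℝ) I).intervalIntegral_comp_comm intF₂
    simpa [hB] using this
  rw [hmulB, smul_add, ← eqF₁, ← mul_smul_comm, ← eqF₂]
end
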